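/- With the André quasifield multiplication a ⊙ b = a · b^{σ(n(a))} as above (σ constant on elements with the same valuation), for all a₁, a₂, b ∈ K: v(a₁ ⊙ b − a₂ ⊙ b) = v(a₁ − a₂) + v(b). -/

import Mathlib

/-- for the André quasifield multiplication, with `σ ∘ n`
depending only on the valuation and `σ(n(1)) = id`, the quasifield axiom
`v(a₁ ⊙ b − a₂ ⊙ b) = v(a₁ − a₂) + v(b)` holds. -/
theorem stmt_12 (K : Type*) [Field K] (v : K → WithTop ℝ)
    (hv0 : ∀ a : K, v a = ⊤ ↔ a = 0)
    (hvmul : ∀ a b : K, v (a * b) = v a + v b)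
    (hvadd : ∀ a b : K, min (v a) (v b) ≤ v (a + b))
    (hvadd' : ∀ a b : K, v a ≠ v b → v (a + b) = min (v a) (v b))
    (G : Subgroup (K ≃+* K)) [Fintype G]
    (hpres : ∀ σ ∈ G, ∀ a : K, v (σ a) = v a)
    (σn : K → K ≃+* K) (hσn : ∀ a : K, σn a ∈ G)
    (hσconst : ∀ a₁ a₂ : K, v a₁ = v a₂ → σn a₁ = σn a₂)
    (hσone : σn 1 = RingEquiv.refl K)
    (mul : K → K → K) (hmul : ∀ a b : K, mul a b = a * (σn a) b) :
    ∀ a₁ a₂ b : K, v (mul a₁ b - mul a₂ b) = v (a₁ - a₂) + v b := by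
  -- basic facts
  have hv1 : v 1 = 0 := by
    have h1 : (1 : K) ≠ 0 := one_ne_zero
    have := hvmul 1 1
    rw [one_mul] at this
    have hne : v 1 ≠ ⊤ := fun h => h1 ((hv0 1).mp h)
    obtain ⟨r, hr⟩ := WithTop.ne_top_iff_exists.mp hne
    rw [← hr] at this ⊢
    have : (r : WithTop ℝ) = r + r := by exact_mod_cast this
    have : r = r + r := by exact_mod_cast this
    have : r = 0 := by linarith
    simp [this]
  have hvneg : ∀ a : K, v (-a) = v a := by
    intro a
    have hm : v (-1 : K) = 0 := by
      have := hvmul (-1) (-1)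
      rw [neg_mul_neg, one_mul, hv1] at this
      have hne : v (-1 : K) ≠ ⊤ := by
        intro h; rw [h] at this; simp at this
      obtain ⟨r, hr⟩ := WithTop.ne_top_iff_exists.mp hne
      rw [← hr] at this ⊢
      have : (0 : ℝ) = r + r := by exact_mod_cast this
      have : r = 0 := by linarith
      simp [this]
    have := hvmul (-1) a
    rw [neg_one_mul, hm, zero_add] at this
    exact this
  intro a₁ a₂ b
  by_cases hb : b = 0
  · subst hb
    simp only [hmul, map_zero, mul_zero, sub_zero]
    rw [(hv0 0).mpr rfl, WithTop.add_top]
  · have hvb : v b ≠ ⊤ := fun h => hb ((hv0 b).mp h)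
    by_cases h : v a₁ = v a₂
    · -- same valuation: same sigma
      have hσ : σn a₁ = σn a₂ := hσconst a₁ a₂ h
      have : mul a₁ b - mul a₂ b = (a₁ - a₂) * (σn a₁) b := by
        rw [hmul, hmul, hσ, sub_mul]
      rw [this, hvmul, hpres _ (hσn a₁)]
    · -- different valuations
      have hx : v (mul a₁ b) = v a₁ + v b := by
        rw [hmul, hvmul, hpres _ (hσn a₁)]
      have hy : v (-(mul a₂ b)) = v a₂ + v b := by
        rw [hvneg, hmul, hvmul, hpres _ (hσn a₂)]
      have hne : v (mul a₁ b) ≠ v (-(mul a₂ b)) := by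
        rw [hx, hy]
        intro hc
        exact h (WithTop.add_right_cancel hvb hc)
      have h1 : v (mul a₁ b - mul a₂ b) = min (v (mul a₁ b)) (v (-(mul a₂ b))) := by
        rw [sub_eq_add_neg]; exact hvadd' _ _ hne
      have h2 : v (a₁ - a₂) = min (v a₁) (v a₂) := by
        rw [sub_eq_add_neg, hvadd' a₁ (-a₂) (by rw [hvneg]; exact h), hvneg]
      rw [h1, hx, hy, h2]
      rcases le_total (v a₁) (v a₂) with hle | hle
      · rw [min_eq_left hle, min_eq_left (add_le_add hle le_rfl)]
      · rw [min_eq_right hle, min_eq_right (add_le_add hle le_rfl)]
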